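/- Operator Cauchy–Schwarz: for operators a₁,…,a_m ∈ B(K₁) and b₁,…,b_m ∈ B(K₂), one has ‖Σᵢ aᵢ ⊗ bᵢ‖_{B(K₁⊗K₂)} ≤ ‖Σᵢ aᵢ aᵢ*‖^{1/2}_{B(K₁)} · ‖Σᵢ bᵢ* bᵢ‖^{1/2}_{B(K₂)}. -/

import Mathlib

open scoped BigOperators Kronecker ComplexOrder Matrix

/-- The ℓ²→ℓ² operator norm of a square complex matrix. -/
noncomputable def opNorm {n : Type*} [Fintype n] [DecidableEq n] (A : Matrix n n ℂ) : ℝ :=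
  ‖Matrix.toEuclideanCLM (𝕜 := ℂ) A‖

/-- The square root of a positive semidefinite matrix, as `Matrix.PosSemidef.sqrt` was defined
in the older Mathlib (since removed). -/
noncomputable def Matrix.PosSemidef.sqrt {n : Type*} {𝕜 : Type*} [Fintype n] [RCLike 𝕜]
    [DecidableEq n] {A : Matrix n n 𝕜} (hA : A.PosSemidef) : Matrix n n 𝕜 :=
  hA.1.eigenvectorUnitary.1 * Matrix.diagonal ((↑) ∘ (√·) ∘ hA.1.eigenvalues) *
    (star hA.1.eigenvectorUnitary : Matrix n n 𝕜)

/-- The trace norm (Schatten-1 norm) of a square complex matrix. -/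
noncomputable def traceNorm {n : Type*} [Fintype n] [DecidableEq n] (A : Matrix n n ℂ) : ℝ :=
  ((Matrix.posSemidef_conjTranspose_mul_self A).sqrt.trace).re

open scoped Kronecker Matrix Matrix.Norms.L2Operator

lemma euclid_norm_sq {n : Type*} [Fintype n] (x : EuclideanSpace ℂ n) :
    ‖x‖ ^ 2 = ∑ i, ‖x i‖ ^ 2 := by
  rw [EuclideanSpace.norm_eq, Real.sq_sqrt (by positivity)]

lemma kron_one_aux {k n : ℕ} (C : Matrix (Fin k) (Fin k) ℂ)
    (x : EuclideanSpace ℂ (Fin k × Fin n)) :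
    ‖(WithLp.equiv 2 (Fin k × Fin n → ℂ)).symm
        ((C ⊗ₖ (1 : Matrix (Fin n) (Fin n) ℂ)) *ᵥ (WithLp.equiv 2 _ x))‖ ≤ ‖C‖ * ‖x‖ := by
  have hnn : (0:ℝ) ≤ ‖C‖ * ‖x‖ := by positivity
  rw [← Real.sqrt_sq (norm_nonneg _), ← Real.sqrt_sq hnn]
  apply Real.sqrt_le_sqrt
  rw [euclid_norm_sq, mul_pow, euclid_norm_sq x]
  have happ : ∀ p : Fin k, ∀ q : Fin n,
      ((C ⊗ₖ (1 : Matrix (Fin n) (Fin n) ℂ)) *ᵥ (WithLp.equiv 2 _ x)) (p, q)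
        = (C *ᵥ (fun p' => x (p', q))) p := by
    intro p q
    simp [Matrix.mulVec, dotProduct, Matrix.one_apply, Fintype.sum_prod_type,
      mul_ite, ite_mul, mul_zero, zero_mul, Finset.sum_ite_eq, Finset.sum_ite_eq']
  rw [Fintype.sum_prod_type (f := fun pq : Fin k × Fin n =>
        ‖((WithLp.equiv 2 (Fin k × Fin n → ℂ)).symm
        ((C ⊗ₖ (1 : Matrix (Fin n) (Fin n) ℂ)) *ᵥ (WithLp.equiv 2 _ x))) (pq.1, pq.2)‖ ^ 2),
      Fintype.sum_prod_type (f := fun pq : Fin k × Fin n => ‖x (pq.1, pq.2)‖ ^ 2),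
      Finset.sum_comm, Finset.sum_comm (f := fun p q => ‖x (p, q)‖ ^ 2), Finset.mul_sum]
  refine Finset.sum_le_sum fun q _ => ?_
  have key : ∑ p : Fin k, ‖(WithLp.equiv 2 (Fin k × Fin n → ℂ)).symm
        ((C ⊗ₖ (1 : Matrix (Fin n) (Fin n) ℂ)) *ᵥ (WithLp.equiv 2 _ x)) (p, q)‖ ^ 2
      = ‖(WithLp.equiv 2 (Fin k → ℂ)).symm (C *ᵥ fun p' => x (p', q))‖ ^ 2 := by
    rw [euclid_norm_sq]
    refine Finset.sum_congr rfl fun p _ => ?_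
    rw [show ((WithLp.equiv 2 (Fin k × Fin n → ℂ)).symm
        ((C ⊗ₖ (1 : Matrix (Fin n) (Fin n) ℂ)) *ᵥ (WithLp.equiv 2 _ x))) (p, q)
      = ((C ⊗ₖ (1 : Matrix (Fin n) (Fin n) ℂ)) *ᵥ (WithLp.equiv 2 _ x)) (p, q) from rfl,
      happ p q]
    rfl
  rw [key]
  have hle := Matrix.l2_opNorm_mulVec C ((WithLp.equiv 2 (Fin k → ℂ)).symm (fun p' => x (p', q)))
  have hxq : ‖(WithLp.equiv 2 (Fin k → ℂ)).symm (fun p' => x (p', q))‖ ^ 2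
      = ∑ p : Fin k, ‖x (p, q)‖ ^ 2 := by
    rw [euclid_norm_sq]; rfl
  calc ‖(WithLp.equiv 2 (Fin k → ℂ)).symm (C *ᵥ fun p' => x (p', q))‖ ^ 2
      ≤ (‖C‖ * ‖(WithLp.equiv 2 (Fin k → ℂ)).symm (fun p' => x (p', q))‖) ^ 2 := by
        apply pow_le_pow_left₀ (norm_nonneg _)
        exact hle
    _ = ‖C‖ ^ 2 * ∑ p : Fin k, ‖x (p, q)‖ ^ 2 := by rw [mul_pow, hxq]

lemma kron_one_le {k n : ℕ} (C : Matrix (Fin k) (Fin k) ℂ) :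
    ‖C ⊗ₖ (1 : Matrix (Fin n) (Fin n) ℂ)‖ ≤ ‖C‖ := by
  rw [Matrix.l2_opNorm_def]
  exact ContinuousLinearMap.opNorm_le_bound _ (norm_nonneg C) fun x => kron_one_aux C x

lemma one_kron_aux {k n : ℕ} (D : Matrix (Fin k) (Fin k) ℂ)
    (x : EuclideanSpace ℂ (Fin n × Fin k)) :
    ‖(WithLp.equiv 2 (Fin n × Fin k → ℂ)).symm
        (((1 : Matrix (Fin n) (Fin n) ℂ) ⊗ₖ D) *ᵥ (WithLp.equiv 2 _ x))‖ ≤ ‖D‖ * ‖x‖ := by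
  have hnn : (0:ℝ) ≤ ‖D‖ * ‖x‖ := by positivity
  rw [← Real.sqrt_sq (norm_nonneg _), ← Real.sqrt_sq hnn]
  apply Real.sqrt_le_sqrt
  rw [euclid_norm_sq, mul_pow, euclid_norm_sq x]
  have happ : ∀ p : Fin n, ∀ q : Fin k,
      ((((1 : Matrix (Fin n) (Fin n) ℂ) ⊗ₖ D)) *ᵥ (WithLp.equiv 2 _ x)) (p, q)
        = (D *ᵥ (fun q' => x (p, q'))) q := by
    intro p q
    simp [Matrix.mulVec, dotProduct, Matrix.one_apply, Fintype.sum_prod_type,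
      mul_ite, ite_mul, mul_zero, zero_mul, Finset.sum_ite_eq, Finset.sum_ite_eq']
  rw [Fintype.sum_prod_type (f := fun pq : Fin n × Fin k =>
        ‖((WithLp.equiv 2 (Fin n × Fin k → ℂ)).symm
        (((1 : Matrix (Fin n) (Fin n) ℂ) ⊗ₖ D) *ᵥ (WithLp.equiv 2 _ x))) (pq.1, pq.2)‖ ^ 2),
      Fintype.sum_prod_type (f := fun pq : Fin n × Fin k => ‖x (pq.1, pq.2)‖ ^ 2),
      Finset.mul_sum]
  refine Finset.sum_le_sum fun p _ => ?_
  have key : ∑ q : Fin k, ‖(WithLp.equiv 2 (Fin n × Fin k → ℂ)).symm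
        (((1 : Matrix (Fin n) (Fin n) ℂ) ⊗ₖ D) *ᵥ (WithLp.equiv 2 _ x)) (p, q)‖ ^ 2
      = ‖(WithLp.equiv 2 (Fin k → ℂ)).symm (D *ᵥ fun q' => x (p, q'))‖ ^ 2 := by
    rw [euclid_norm_sq]
    refine Finset.sum_congr rfl fun q _ => ?_
    rw [show ((WithLp.equiv 2 (Fin n × Fin k → ℂ)).symm
        (((1 : Matrix (Fin n) (Fin n) ℂ) ⊗ₖ D) *ᵥ (WithLp.equiv 2 _ x))) (p, q)
      = (((1 : Matrix (Fin n) (Fin n) ℂ) ⊗ₖ D) *ᵥ (WithLp.equiv 2 _ x)) (p, q) from rfl,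
      happ p q]
    rfl
  rw [key]
  have hle := Matrix.l2_opNorm_mulVec D ((WithLp.equiv 2 (Fin k → ℂ)).symm (fun q' => x (p, q')))
  have hxq : ‖(WithLp.equiv 2 (Fin k → ℂ)).symm (fun q' => x (p, q'))‖ ^ 2
      = ∑ q : Fin k, ‖x (p, q)‖ ^ 2 := by
    rw [euclid_norm_sq]; rfl
  calc ‖(WithLp.equiv 2 (Fin k → ℂ)).symm (D *ᵥ fun q' => x (p, q'))‖ ^ 2
      ≤ (‖D‖ * ‖(WithLp.equiv 2 (Fin k → ℂ)).symm (fun q' => x (p, q'))‖) ^ 2 := by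
        apply pow_le_pow_left₀ (norm_nonneg _)
        exact hle
    _ = ‖D‖ ^ 2 * ∑ q : Fin k, ‖x (p, q)‖ ^ 2 := by rw [mul_pow, hxq]

lemma one_kron_le {k n : ℕ} (D : Matrix (Fin k) (Fin k) ℂ) :
    ‖(1 : Matrix (Fin n) (Fin n) ℂ) ⊗ₖ D‖ ≤ ‖D‖ := by
  rw [Matrix.l2_opNorm_def]
  exact ContinuousLinearMap.opNorm_le_bound _ (norm_nonneg D) fun x => one_kron_aux D x

lemma operator_cs_aux {m k1 k2 : ℕ}
    (a : Fin m → Matrix (Fin k1) (Fin k1) ℂ) (b : Fin m → Matrix (Fin k2) (Fin k2) ℂ) :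
    ‖∑ i, a i ⊗ₖ b i‖ ≤
      Real.sqrt ‖∑ i, a i * (a i)ᴴ‖ * Real.sqrt ‖∑ i, (b i)ᴴ * b i‖ := by
  set A : Matrix (Fin k1 × Fin k2) ((Fin m × Fin k1) × Fin k2) ℂ :=
    Matrix.of fun pq irs => a irs.1.1 pq.1 irs.1.2 * (if pq.2 = irs.2 then 1 else 0) with hA
  set B : Matrix ((Fin m × Fin k1) × Fin k2) (Fin k1 × Fin k2) ℂ :=
    Matrix.of fun irs pq => (if irs.1.2 = pq.1 then 1 else 0) * b irs.1.1 irs.2 pq.2 with hB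
  have hAB : A * B = ∑ i, a i ⊗ₖ b i := by
    ext ⟨p, q⟩ ⟨p', q'⟩
    simp [hA, hB, Matrix.mul_apply, Fintype.sum_prod_type, mul_ite, ite_mul, mul_zero,
      zero_mul, Finset.sum_ite_eq, Finset.sum_ite_eq', Matrix.sum_apply]
  have hAA : A * Aᴴ = (∑ i, a i * (a i)ᴴ) ⊗ₖ (1 : Matrix (Fin k2) (Fin k2) ℂ) := by
    ext ⟨p, q⟩ ⟨p', q'⟩
    simp [hA, Matrix.mul_apply, Matrix.conjTranspose_apply, Fintype.sum_prod_type, mul_ite,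
      ite_mul, mul_zero, zero_mul, Finset.sum_ite_eq, Finset.sum_ite_eq', Matrix.sum_apply,
      Matrix.one_apply]
    by_cases h : q = q'
    · simp [h]
    · simp [h, Ne.symm h]
  have hBB : Bᴴ * B = (1 : Matrix (Fin k1) (Fin k1) ℂ) ⊗ₖ (∑ i, (b i)ᴴ * b i) := by
    ext ⟨p, q⟩ ⟨p', q'⟩
    simp [hB, Matrix.mul_apply, Matrix.conjTranspose_apply, Fintype.sum_prod_type, mul_ite,
      ite_mul, mul_zero, zero_mul, Finset.sum_ite_eq, Finset.sum_ite_eq', Matrix.sum_apply,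
      Matrix.one_apply]
    by_cases h : p = p'
    · simp [h]
    · simp [h, Ne.symm h]
  have hA2 : ‖A‖ * ‖A‖ = ‖A * Aᴴ‖ := by
    conv_lhs => rw [← Matrix.l2_opNorm_conjTranspose A]
    rw [← Matrix.l2_opNorm_conjTranspose_mul_self Aᴴ, Matrix.conjTranspose_conjTranspose]
  have hB2 : ‖B‖ * ‖B‖ = ‖Bᴴ * B‖ := (Matrix.l2_opNorm_conjTranspose_mul_self B).symm
  have hAle : ‖A‖ ≤ Real.sqrt ‖∑ i, a i * (a i)ᴴ‖ := by
    rw [← Real.sqrt_mul_self (norm_nonneg A), hA2, hAA]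
    exact Real.sqrt_le_sqrt (kron_one_le _)
  have hBle : ‖B‖ ≤ Real.sqrt ‖∑ i, (b i)ᴴ * b i‖ := by
    rw [← Real.sqrt_mul_self (norm_nonneg B), hB2, hBB]
    exact Real.sqrt_le_sqrt (one_kron_le _)
  calc ‖∑ i, a i ⊗ₖ b i‖ = ‖A * B‖ := by rw [hAB]
    _ ≤ ‖A‖ * ‖B‖ := Matrix.l2_opNorm_mul A B
    _ ≤ _ := mul_le_mul hAle hBle (norm_nonneg B) (Real.sqrt_nonneg _)


/-- operator Cauchy–Schwarz (the Haagerup tensor product inequality). -/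
theorem operator_cauchy_schwarz {m k1 k2 : ℕ}
    (a : Fin m → Matrix (Fin k1) (Fin k1) ℂ) (b : Fin m → Matrix (Fin k2) (Fin k2) ℂ) :
    opNorm (∑ i, a i ⊗ₖ b i) ≤
      Real.sqrt (opNorm (∑ i, a i * (a i)ᴴ)) * Real.sqrt (opNorm (∑ i, (b i)ᴴ * b i)) := by
  exact operator_cs_aux a b
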